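/- Define F(x,α) = −2x·ψ(α) + 2x³, H(α) = 6α·(1/ψ'(α) + 2ψ(α)), and G(x,α) = 12x²α − F(x,α)² − H(α), where ψ solves 3x·ψ'' + 6x·(ψ')³ − 4ψ·(ψ')² − 3ψ' = 0 with ψ(0)=1, ψ'(0)=−3/4. Then at (x,α) = (1,0): F = 0, G = 0, ∂F/∂x = 4, ∂F/∂α = 3/2, ∂G/∂x = 0, and ∂G/∂α = 8. -/

import Mathlib

/-- `ψ` is an analytic solution near `0` of the singular Cauchy problem
`3x ψ'' + 6x (ψ')³ − 4ψ (ψ')² − 3ψ' = 0`, `ψ(0) = 1`, `ψ'(0) = −3/4`. -/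
def GavrilovODE (ψ : ℝ → ℝ) : Prop :=
  AnalyticAt ℝ ψ 0 ∧ ψ 0 = 1 ∧ deriv ψ 0 = -(3/4) ∧
    ∀ᶠ x in nhds (0:ℝ),
      3 * x * deriv (deriv ψ) x + 6 * x * (deriv ψ x)^3
        - 4 * ψ x * (deriv ψ x)^2 - 3 * deriv ψ x = 0

/-- Values of `F`, `G` and of their partial derivatives at `(x,α) = (1,0)`. -/
theorem gavrilov_FG_values (ψ : ℝ → ℝ) (h : GavrilovODE ψ)
    (F : ℝ → ℝ → ℝ) (hF : ∀ x α, F x α = -2*x*ψ α + 2*x^3)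
    (H : ℝ → ℝ) (hH : ∀ α, H α = 6*α*(1/deriv ψ α + 2*ψ α))
    (G : ℝ → ℝ → ℝ) (hG : ∀ x α, G x α = 12*x^2*α - (F x α)^2 - H α) :
    F 1 0 = 0 ∧ G 1 0 = 0 ∧
    deriv (fun x => F x 0) 1 = 4 ∧
    deriv (fun α => F 1 α) 0 = 3/2 ∧
    deriv (fun x => G x 0) 1 = 0 ∧
    deriv (fun α => G 1 α) 0 = 8 := by
  obtain ⟨ha, h0, h1, -⟩ := h
  have hψd : DifferentiableAt ℝ ψ 0 := ha.differentiableAt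
  have hψ'a : AnalyticAt ℝ (deriv ψ) 0 :=
    ((ContinuousLinearMap.apply ℝ ℝ (1:ℝ)).analyticAt _).comp ha.fderiv
  have hψ'd : DifferentiableAt ℝ (deriv ψ) 0 := hψ'a.differentiableAt
  have hψ'0 : deriv ψ 0 ≠ 0 := by rw [h1]; norm_num
  have F10 : F 1 0 = 0 := by rw [hF, h0]; ring
  have H0 : H 0 = 0 := by rw [hH]; ring
  have G10 : G 1 0 = 0 := by rw [hG, F10, H0]; ring
  refine ⟨F10, G10, ?_, ?_, ?_, ?_⟩
  · have heq : (fun x : ℝ => F x 0) = fun x => -2*x + 2*x^3 := by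
      funext x; rw [hF, h0]; ring
    rw [heq]
    have hd : HasDerivAt (fun x : ℝ => -2*x + 2*x^3) (-2*1 + 2*(3*1^2)) 1 := by
      have := ((hasDerivAt_id (1:ℝ)).const_mul (-2)).fun_add
        (((hasDerivAt_pow 3 (1:ℝ))).const_mul 2)
      simpa using this
    rw [hd.deriv]; norm_num
  · have heq : (fun α : ℝ => F 1 α) = fun α => -2*ψ α + 2 := by
      funext α; rw [hF]; ring
    rw [heq]
    have hd : HasDerivAt (fun α : ℝ => -2*ψ α + 2) (-2 * deriv ψ 0) 0 :=
      (hψd.hasDerivAt.const_mul (-2)).add_const 2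
    rw [hd.deriv, h1]; norm_num
  · have heq : (fun x : ℝ => G x 0) = fun x => -((-2*x + 2*x^3)^2) - H 0 := by
      funext x; rw [hG, hF, h0]; ring
    rw [heq]
    have hp : HasDerivAt (fun x : ℝ => -2*x + 2*x^3) (-2*1 + 2*(3*1^2)) 1 := by
      have := ((hasDerivAt_id (1:ℝ)).const_mul (-2)).fun_add
        (((hasDerivAt_pow 3 (1:ℝ))).const_mul 2)
      simpa using this
    have hd : HasDerivAt (fun x : ℝ => -((-2*x + 2*x^3)^2) - H 0)
        (-(2 * (-2*1 + 2*1^3)^(2-1) * (-2*1 + 2*(3*1^2)))) 1 :=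
      ((hp.pow 2).neg).sub_const (H 0)
    rw [hd.deriv]; norm_num
  · have heq : (fun α : ℝ => G 1 α)
        = fun α => 12*α - (-2*ψ α + 2)^2 - 6*α*((deriv ψ α)⁻¹ + 2*ψ α) := by
      funext α; rw [hG, hF, hH, one_div]; ring
    rw [heq]
    have h12 : HasDerivAt (fun α : ℝ => 12*α) 12 0 := by
      simpa using (hasDerivAt_id (0:ℝ)).const_mul 12
    have hq : HasDerivAt (fun α : ℝ => (-2*ψ α + 2)^2)
        (2 * (-2*ψ 0 + 2)^1 * (-2 * deriv ψ 0)) 0 :=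
      ((hψd.hasDerivAt.const_mul (-2)).add_const 2).pow 2
    have hinv : HasDerivAt (fun α : ℝ => (deriv ψ α)⁻¹)
        (-(deriv (deriv ψ) 0) / (deriv ψ 0)^2) 0 :=
      hψ'd.hasDerivAt.inv hψ'0
    have hg : HasDerivAt (fun α : ℝ => (deriv ψ α)⁻¹ + 2*ψ α)
        (-(deriv (deriv ψ) 0) / (deriv ψ 0)^2 + 2 * deriv ψ 0) 0 :=
      hinv.add (hψd.hasDerivAt.const_mul 2)
    have hlin : HasDerivAt (fun α : ℝ => 6*α) 6 0 := by
      simpa using (hasDerivAt_id (0:ℝ)).const_mul 6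
    have hprod := hlin.fun_mul hg
    have hd := (h12.fun_sub hq).fun_sub hprod
    rw [hd.deriv, h0, h1]
    norm_num
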